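/- Let w1, w2 be even integers ≥ 2. For every P ∈ W_{w1,w2}^ℚ, the polynomial Q = ((1,1)+(S,S))·P = P + (S,S)·P satisfies ((1+S),1)·Q = 0, ((1+U+U²),1)·Q = 0, (1,(1+S))·Q = 0 and (1,(1+U+U²))·Q = 0; that is, Q lies in W_{w1}^ℚ ⊗ W_{w2}^ℚ, the space of polynomials annihilated by the one-variable Manin relations in each variable separately. -/

import Mathlib

open MvPolynomial

/-- `SL(2, ℤ)`. -/
abbrev SL2Z := Matrix.SpecialLinearGroup (Fin 2) ℤ

/-- `S = [[0,-1],[1,0]]`. -/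
def matS : SL2Z := ⟨!![0, -1; 1, 0], by norm_num [Matrix.det_fin_two_of]⟩

/-- `U = [[0,1],[-1,1]]`. -/
def matU : SL2Z := ⟨!![0, 1; -1, 1], by norm_num [Matrix.det_fin_two_of]⟩

/-- `T = [[1,1],[0,1]]`. -/
def matT : SL2Z := ⟨!![1, 1; 0, 1], by norm_num [Matrix.det_fin_two_of]⟩

/-- The weight-`w` action of `γ = [[a,b],[c,d]] ∈ SL(2,ℤ)` on a one-variable polynomial of
degree ≤ w : `(γ·Q)(X) = (-cX+a)^w Q((dX-b)/(-cX+a))`, written coefficientwise. -/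
noncomputable def polyAct1 {R : Type*} [CommRing R] (w : ℕ) (γ : SL2Z) (Q : Polynomial R) :
    Polynomial R :=
  ∑ m ∈ Finset.range (w + 1),
    Polynomial.C (Q.coeff m) *
      (Polynomial.C ((γ.1 1 1 : ℤ) : R) * Polynomial.X - Polynomial.C ((γ.1 0 1 : ℤ) : R)) ^ m *
      (Polynomial.C (-((γ.1 1 0 : ℤ) : R)) * Polynomial.X + Polynomial.C ((γ.1 0 0 : ℤ) : R)) ^
        (w - m)

/-- `((dX-b)^m) * ((-cX+a)^n)` for `γ = [[a,b],[c,d]]`, in the variable `x`. -/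
noncomputable def mfrac {R : Type*} [CommRing R] (γ : SL2Z) (x : MvPolynomial (Fin 2) R)
    (m n : ℕ) : MvPolynomial (Fin 2) R :=
  (MvPolynomial.C ((γ.1 1 1 : ℤ) : R) * x - MvPolynomial.C ((γ.1 0 1 : ℤ) : R)) ^ m *
    (MvPolynomial.C (-((γ.1 1 0 : ℤ) : R)) * x + MvPolynomial.C ((γ.1 0 0 : ℤ) : R)) ^ n

/-- The action of a pair `(γ1, γ2) ∈ SL(2,ℤ)²` on polynomials in `X1 = X 0`, `X2 = X 1` of
degree ≤ w1 in `X1` and ≤ w2 in `X2`: the weight-`w1` action on `X1` via `γ1` and the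
weight-`w2` action on `X2` via `γ2`. -/
noncomputable def polyAct2 {R : Type*} [CommRing R] (w1 w2 : ℕ) (γ1 γ2 : SL2Z)
    (P : MvPolynomial (Fin 2) R) : MvPolynomial (Fin 2) R :=
  ∑ m1 ∈ Finset.range (w1 + 1), ∑ m2 ∈ Finset.range (w2 + 1),
    MvPolynomial.C (MvPolynomial.coeff (Finsupp.single 0 m1 + Finsupp.single 1 m2) P) *
      mfrac γ1 (MvPolynomial.X 0) m1 (w1 - m1) * mfrac γ2 (MvPolynomial.X 1) m2 (w2 - m2)

/-- Membership in `V_w^ℚ` : degree at most `w`. -/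
def MemV1 (w : ℕ) (P : Polynomial ℚ) : Prop := P.natDegree ≤ w

/-- Membership in `W_w^ℚ = {P ∈ V_w^ℚ : (1+S)·P = 0, (1+U+U²)·P = 0}`. -/
def MemW1 (w : ℕ) (P : Polynomial ℚ) : Prop :=
  MemV1 w P ∧ P + polyAct1 w matS P = 0 ∧
    P + polyAct1 w matU P + polyAct1 w (matU ^ 2) P = 0

/-- Membership in `V_{w1,w2}^ℚ` : degree ≤ w1 in `X1 = X 0` and ≤ w2 in `X2 = X 1`. -/
def MemV2 (w1 w2 : ℕ) (P : MvPolynomial (Fin 2) ℚ) : Prop :=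
  MvPolynomial.degreeOf 0 P ≤ w1 ∧ MvPolynomial.degreeOf 1 P ≤ w2

/-- The embedding `P1(X) ↦ P1(X1)` of one-variable polynomials in the variable `X1 = X 0`. -/
noncomputable def toX1 (P1 : Polynomial ℚ) : MvPolynomial (Fin 2) ℚ :=
  Polynomial.aeval (MvPolynomial.X 0 : MvPolynomial (Fin 2) ℚ) P1


/-- The embedding `P2(X) ↦ P2(X2)` of one-variable polynomials in the variable `X2 = X 1`. -/
noncomputable def toX2 (P2 : Polynomial ℚ) : MvPolynomial (Fin 2) ℚ :=
  Polynomial.aeval (MvPolynomial.X 1 : MvPolynomial (Fin 2) ℚ) P2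

/-- Membership in `V_{w1,w2}^ℚ[I_D]` : lies in `V_{w1,w2}^ℚ` and is killed by
`(1,1)+(S,S)` and `(1,1)+(U,U)+(U²,U²)`. -/
def MemVID (w1 w2 : ℕ) (P : MvPolynomial (Fin 2) ℚ) : Prop :=
  MemV2 w1 w2 P ∧ P + polyAct2 w1 w2 matS matS P = 0 ∧
    P + polyAct2 w1 w2 matU matU P + polyAct2 w1 w2 (matU ^ 2) (matU ^ 2) P = 0

/-- Diagonal evaluation `P(X1,X2) ↦ P(Z,Z)`. -/
noncomputable def diagEval (P : MvPolynomial (Fin 2) ℚ) : Polynomial ℚ :=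
  MvPolynomial.aeval (fun _ : Fin 2 => (Polynomial.X : Polynomial ℚ)) P

/-- Membership in `W_{w1,w2}^ℚ` : lies in `V_{w1,w2}^ℚ` and is killed by the four Manin
relations of order 2 : `R1 = (1+S,1+S)`,
`R2 = (S,S)+(S,US)+(US,US)+(1,U)-(U²,U²)`, `R3 = (1+U+U²,1)((1,1)+(S,S))`,
`R4 = (1,1+U+U²)((1,1)+(S,S))`. -/
def MemW2 (w1 w2 : ℕ) (P : MvPolynomial (Fin 2) ℚ) : Prop :=
  MemV2 w1 w2 P ∧
  P + polyAct2 w1 w2 matS 1 P + polyAct2 w1 w2 1 matS P + polyAct2 w1 w2 matS matS P = 0 ∧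
  polyAct2 w1 w2 matS matS P + polyAct2 w1 w2 matS (matU * matS) P +
      polyAct2 w1 w2 (matU * matS) (matU * matS) P + polyAct2 w1 w2 1 matU P -
      polyAct2 w1 w2 (matU ^ 2) (matU ^ 2) P = 0 ∧
  P + polyAct2 w1 w2 matS matS P + polyAct2 w1 w2 matU 1 P +
      polyAct2 w1 w2 (matU * matS) matS P + polyAct2 w1 w2 (matU ^ 2) 1 P +
      polyAct2 w1 w2 (matU ^ 2 * matS) matS P = 0 ∧
  P + polyAct2 w1 w2 matS matS P + polyAct2 w1 w2 1 matU P +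
      polyAct2 w1 w2 matS (matU * matS) P + polyAct2 w1 w2 1 (matU ^ 2) P +
      polyAct2 w1 w2 matS (matU ^ 2 * matS) P = 0

abbrev R2Q := MvPolynomial (Fin 2) ℚ

noncomputable def Ap (γ : SL2Z) (x : R2Q) : R2Q :=
  MvPolynomial.C ((γ.1 1 1 : ℤ) : ℚ) * x - MvPolynomial.C ((γ.1 0 1 : ℤ) : ℚ)

noncomputable def Bp (γ : SL2Z) (x : R2Q) : R2Q :=
  MvPolynomial.C (-((γ.1 1 0 : ℤ) : ℚ)) * x + MvPolynomial.C ((γ.1 0 0 : ℤ) : ℚ)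

lemma Ap_mul (γ δ : SL2Z) (x : R2Q) :
    Ap (γ * δ) x = C ((δ.1 1 1 : ℤ) : ℚ) * Ap γ x - C ((δ.1 0 1 : ℤ) : ℚ) * Bp γ x := by
  simp only [Ap, Bp, Matrix.SpecialLinearGroup.coe_mul, Matrix.mul_apply, Fin.sum_univ_two]
  push_cast
  simp only [map_add, map_mul, map_neg]
  ring

lemma Bp_mul (γ δ : SL2Z) (x : R2Q) :
    Bp (γ * δ) x = C (-((δ.1 1 0 : ℤ) : ℚ)) * Ap γ x + C ((δ.1 0 0 : ℤ) : ℚ) * Bp γ x := by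
  simp only [Ap, Bp, Matrix.SpecialLinearGroup.coe_mul, Matrix.mul_apply, Fin.sum_univ_two]
  push_cast
  simp only [map_add, map_mul, map_neg]
  ring

lemma Bp_ne_zero (γ : SL2Z) (i : Fin 2) : Bp γ (X i) ≠ 0 := by
  intro h
  have hdet := γ.2
  rw [Matrix.det_fin_two] at hdet
  have h0 : ((γ.1 0 0 : ℤ) : ℚ) = 0 := by
    have := congrArg (MvPolynomial.coeff 0) h
    simp only [Bp, MvPolynomial.coeff_add, MvPolynomial.coeff_C_mul, MvPolynomial.coeff_C,
      MvPolynomial.coeff_X', MvPolynomial.coeff_zero] at this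
    simpa using this
  have h1 : ((γ.1 1 0 : ℤ) : ℚ) = 0 := by
    have := congrArg (MvPolynomial.coeff (Finsupp.single i 1)) h
    simp only [Bp, MvPolynomial.coeff_add, MvPolynomial.coeff_C_mul, MvPolynomial.coeff_C,
      MvPolynomial.coeff_X', MvPolynomial.coeff_zero] at this
    simpa [eq_comm, Finsupp.single_eq_zero] using this
  have e0 : γ.1 0 0 = 0 := by exact_mod_cast h0
  have e1 : γ.1 1 0 = 0 := by exact_mod_cast h1
  rw [e0, e1] at hdet
  simp at hdet

lemma mfrac_eq (γ : SL2Z) (x : R2Q) (m n : ℕ) : mfrac γ x m n = (Ap γ x) ^ m * (Bp γ x) ^ n := rfl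

lemma fin2_finsupp (d : Fin 2 →₀ ℕ) : d = Finsupp.single 0 (d 0) + Finsupp.single 1 (d 1) := by
  ext j
  fin_cases j <;> simp [Finsupp.single_apply]

lemma single_add_single_eq (a b m1 m2 : ℕ) :
    (Finsupp.single (0 : Fin 2) m1 + Finsupp.single 1 m2 = Finsupp.single 0 a + Finsupp.single 1 b)
      ↔ (m1 = a ∧ m2 = b) := by
  constructor
  · intro h
    constructor
    · have := DFunLike.congr_fun h 0
      simpa [Finsupp.single_apply] using this
    · have := DFunLike.congr_fun h 1
      simpa [Finsupp.single_apply] using this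
  · rintro ⟨rfl, rfl⟩; rfl

lemma coeff_mono (a b m1 m2 : ℕ) (c : ℚ) :
    MvPolynomial.coeff (Finsupp.single 0 a + Finsupp.single 1 b)
      (MvPolynomial.monomial (Finsupp.single 0 m1 + Finsupp.single 1 m2) c : R2Q)
      = if m2 = b ∧ m1 = a then c else 0 := by
  rw [MvPolynomial.coeff_monomial]
  simp only [single_add_single_eq, and_comm]

lemma polyAct2_monomial (w1 w2 m1 m2 : ℕ) (h1 : m1 ≤ w1) (h2 : m2 ≤ w2) (γ1 γ2 : SL2Z) (c : ℚ) :
    polyAct2 w1 w2 γ1 γ2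
        (MvPolynomial.monomial (Finsupp.single 0 m1 + Finsupp.single 1 m2) c : R2Q)
      = C c * mfrac γ1 (X 0) m1 (w1 - m1) * mfrac γ2 (X 1) m2 (w2 - m2) := by
  unfold polyAct2
  simp only [coeff_mono, ite_and,
    apply_ite (fun q : ℚ => (MvPolynomial.C q : R2Q)), map_zero, ite_mul, zero_mul]
  simp [Finset.sum_ite_eq, Finset.mem_range, Nat.lt_succ_iff, h1, h2]

noncomputable def polyAct2Hom (w1 w2 : ℕ) (γ1 γ2 : SL2Z) :
    MvPolynomial (Fin 2) ℚ →+ MvPolynomial (Fin 2) ℚ where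
  toFun := polyAct2 w1 w2 γ1 γ2
  map_zero' := by simp [polyAct2]
  map_add' P Q := by
    unfold polyAct2
    simp only [MvPolynomial.coeff_add, map_add, add_mul]
    simp only [Finset.sum_add_distrib]

lemma polyAct2_add (w1 w2 : ℕ) (γ1 γ2 : SL2Z) (P Q : R2Q) :
    polyAct2 w1 w2 γ1 γ2 (P + Q) = polyAct2 w1 w2 γ1 γ2 P + polyAct2 w1 w2 γ1 γ2 Q :=
  (polyAct2Hom w1 w2 γ1 γ2).map_add P Q

lemma coeff_zero_of_degreeOf_lt {Q : R2Q} {i : Fin 2} {w : ℕ} (h : MvPolynomial.degreeOf i Q ≤ w)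
    {d : Fin 2 →₀ ℕ} (hd : w < d i) : MvPolynomial.coeff d Q = 0 := by
  by_contra hc
  have hmem : d ∈ Q.support := MvPolynomial.mem_support_iff.mpr hc
  have := MvPolynomial.monomial_le_degreeOf i hmem
  omega

lemma single_add_single_eq' (d : Fin 2 →₀ ℕ) (a b : ℕ) :
    (Finsupp.single (0 : Fin 2) a + Finsupp.single 1 b = d) ↔ (a = d 0 ∧ b = d 1) := by
  constructor
  · intro h
    constructor
    · have := DFunLike.congr_fun h 0
      simpa [Finsupp.single_apply] using this
    · have := DFunLike.congr_fun h 1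
      simpa [Finsupp.single_apply] using this
  · rintro ⟨rfl, rfl⟩
    exact (fin2_finsupp d).symm

lemma trunc_eq (w1 w2 : ℕ) (Q : R2Q) (h1 : MvPolynomial.degreeOf 0 Q ≤ w1)
    (h2 : MvPolynomial.degreeOf 1 Q ≤ w2) :
    Q = ∑ m1 ∈ Finset.range (w1 + 1), ∑ m2 ∈ Finset.range (w2 + 1),
        MvPolynomial.monomial (Finsupp.single 0 m1 + Finsupp.single 1 m2)
          (MvPolynomial.coeff (Finsupp.single 0 m1 + Finsupp.single 1 m2) Q) := by
  apply MvPolynomial.ext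
  intro d
  simp only [MvPolynomial.coeff_sum]
  have key : ∀ a b : ℕ,
      MvPolynomial.coeff d (MvPolynomial.monomial (Finsupp.single 0 a + Finsupp.single 1 b)
        (MvPolynomial.coeff (Finsupp.single 0 a + Finsupp.single 1 b) Q) : R2Q)
      = if d 1 = b then (if d 0 = a then MvPolynomial.coeff d Q else 0) else 0 := by
    intro a b
    rw [MvPolynomial.coeff_monomial]
    by_cases hab : a = d 0 ∧ b = d 1
    · obtain ⟨ha, hb⟩ := hab
      rw [if_pos ((single_add_single_eq' d a b).mpr ⟨ha, hb⟩), if_pos hb.symm, if_pos ha.symm]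
      rw [ha, hb, ← fin2_finsupp d]
    · rw [if_neg (fun h => hab ((single_add_single_eq' d a b).mp h))]
      rcases not_and_or.mp hab with h | h
      · by_cases hb : d 1 = b
        · rw [if_pos hb, if_neg (fun hh => h hh.symm)]
        · rw [if_neg hb]
      · rw [if_neg (fun hh => h hh.symm)]
  simp only [key]
  by_cases hd1 : d 1 ≤ w2
  · simp only [Finset.sum_ite_eq, Finset.mem_range, Nat.lt_succ_iff, hd1, if_true]
    by_cases hd0 : d 0 ≤ w1
    · simp [Finset.sum_ite_eq, Finset.mem_range, Nat.lt_succ_iff, hd0]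
    · simp only [Finset.sum_ite_eq, Finset.mem_range, Nat.lt_succ_iff, hd0, if_false]
      exact coeff_zero_of_degreeOf_lt h1 (show w1 < d 0 by omega)
  · simp only [Finset.sum_ite_eq, Finset.mem_range, Nat.lt_succ_iff, hd1, if_false,
      Finset.sum_const_zero]
    exact coeff_zero_of_degreeOf_lt h2 (show w2 < d 1 by omega)

lemma degreeOf_C_Q (i : Fin 2) (q : ℚ) : MvPolynomial.degreeOf i (MvPolynomial.C q : R2Q) = 0 :=
  MvPolynomial.degreeOf_C q i

lemma degreeOf_Ap_le (γ : SL2Z) (i j : Fin 2) :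
    MvPolynomial.degreeOf i (Ap γ (X j)) ≤ if i = j then 1 else 0 := by
  unfold Ap
  refine le_trans (MvPolynomial.degreeOf_sub_le i _ _) (max_le ?_ ?_)
  · refine le_trans (MvPolynomial.degreeOf_mul_le i _ _) ?_
    rw [degreeOf_C_Q, MvPolynomial.degreeOf_X, zero_add]
  · rw [degreeOf_C_Q]
    exact Nat.zero_le _

lemma degreeOf_Bp_le (γ : SL2Z) (i j : Fin 2) :
    MvPolynomial.degreeOf i (Bp γ (X j)) ≤ if i = j then 1 else 0 := by
  unfold Bp
  refine le_trans (MvPolynomial.degreeOf_add_le i _ _) (max_le ?_ ?_)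
  · refine le_trans (MvPolynomial.degreeOf_mul_le i _ _) ?_
    rw [degreeOf_C_Q, MvPolynomial.degreeOf_X, zero_add]
  · rw [degreeOf_C_Q]
    exact Nat.zero_le _

lemma degreeOf_mfrac_le (γ : SL2Z) (i j : Fin 2) (m n : ℕ) :
    MvPolynomial.degreeOf i (mfrac γ (X j) m n : R2Q) ≤ if i = j then m + n else 0 := by
  rw [mfrac_eq]
  have hA := le_trans (MvPolynomial.degreeOf_pow_le i (Ap γ (X j)) m)
    (Nat.mul_le_mul_left m (degreeOf_Ap_le γ i j))
  have hB := le_trans (MvPolynomial.degreeOf_pow_le i (Bp γ (X j)) n)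
    (Nat.mul_le_mul_left n (degreeOf_Bp_le γ i j))
  refine le_trans (MvPolynomial.degreeOf_mul_le i _ _) ?_
  by_cases h : i = j
  · rw [if_pos h] at hA hB ⊢
    omega
  · rw [if_neg h] at hA hB ⊢
    omega

lemma degreeOf_term_le (γ1 γ2 : SL2Z) (c : ℚ) (m1 n1 m2 n2 : ℕ) :
    MvPolynomial.degreeOf 0 (C c * mfrac γ1 (X 0) m1 n1 * mfrac γ2 (X 1) m2 n2 : R2Q) ≤ m1 + n1
    ∧ MvPolynomial.degreeOf 1 (C c * mfrac γ1 (X 0) m1 n1 * mfrac γ2 (X 1) m2 n2 : R2Q)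
        ≤ m2 + n2 := by
  have h01 : MvPolynomial.degreeOf 0 (mfrac γ1 (X 0) m1 n1 : R2Q) ≤ m1 + n1 := by
    have := degreeOf_mfrac_le γ1 0 0 m1 n1
    rwa [if_pos rfl] at this
  have h02 : MvPolynomial.degreeOf 0 (mfrac γ2 (X 1) m2 n2 : R2Q) ≤ 0 := by
    have := degreeOf_mfrac_le γ2 0 1 m2 n2
    rwa [if_neg (by decide)] at this
  have h11 : MvPolynomial.degreeOf 1 (mfrac γ1 (X 0) m1 n1 : R2Q) ≤ 0 := by
    have := degreeOf_mfrac_le γ1 1 0 m1 n1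
    rwa [if_neg (by decide)] at this
  have h12 : MvPolynomial.degreeOf 1 (mfrac γ2 (X 1) m2 n2 : R2Q) ≤ m2 + n2 := by
    have := degreeOf_mfrac_le γ2 1 1 m2 n2
    rwa [if_pos rfl] at this
  have hc0 : MvPolynomial.degreeOf 0 (C c * mfrac γ1 (X 0) m1 n1 : R2Q) ≤ m1 + n1 :=
    le_trans (MvPolynomial.degreeOf_mul_le 0 _ _)
      (by rw [degreeOf_C_Q, zero_add]; exact h01)
  have hc1 : MvPolynomial.degreeOf 1 (C c * mfrac γ1 (X 0) m1 n1 : R2Q) ≤ 0 :=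
    le_trans (MvPolynomial.degreeOf_mul_le 1 _ _)
      (by rw [degreeOf_C_Q, zero_add]; exact h11)
  constructor
  · refine le_trans (MvPolynomial.degreeOf_mul_le 0 _ _) ?_
    omega
  · refine le_trans (MvPolynomial.degreeOf_mul_le 1 _ _) ?_
    omega

noncomputable abbrev KK := FractionRing R2Q

noncomputable def emb : R2Q →+* KK := algebraMap R2Q KK

lemma emb_inj : Function.Injective emb := IsFractionRing.injective R2Q KK

lemma emb_B_ne (γ : SL2Z) (i : Fin 2) : emb (Bp γ (X i)) ≠ 0 := fun h =>
  Bp_ne_zero γ i (emb_inj (by rw [h, map_zero]))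

noncomputable def gfun (γ1 γ2 : SL2Z) : Fin 2 → KK :=
  ![emb (Ap γ1 (X 0)) / emb (Bp γ1 (X 0)), emb (Ap γ2 (X 1)) / emb (Bp γ2 (X 1))]

lemma mono_eq (m1 m2 : ℕ) (c : ℚ) :
    (MvPolynomial.monomial (Finsupp.single 0 m1 + Finsupp.single 1 m2) c : R2Q)
      = C c * X 0 ^ m1 * X 1 ^ m2 := by
  simp [MvPolynomial.X_pow_eq_monomial, MvPolynomial.monomial_mul, MvPolynomial.C_mul_monomial]

lemma term_K (w1 w2 m1 m2 : ℕ) (h1 : m1 ≤ w1) (h2 : m2 ≤ w2) (γ1 γ2 : SL2Z) (c : ℚ) :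
    emb (C c * mfrac γ1 (X 0) m1 (w1 - m1) * mfrac γ2 (X 1) m2 (w2 - m2))
      = emb (Bp γ1 (X 0)) ^ w1 * emb (Bp γ2 (X 1)) ^ w2 *
        (emb (C c) * gfun γ1 γ2 0 ^ m1 * gfun γ1 γ2 1 ^ m2) := by
  obtain ⟨n1, rfl⟩ : ∃ n1, w1 = m1 + n1 := ⟨w1 - m1, by omega⟩
  obtain ⟨n2, rfl⟩ : ∃ n2, w2 = m2 + n2 := ⟨w2 - m2, by omega⟩
  have hb1 : emb (Bp γ1 (X 0)) ≠ 0 := emb_B_ne _ _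
  have hb2 : emb (Bp γ2 (X 1)) ≠ 0 := emb_B_ne _ _
  simp only [Nat.add_sub_cancel_left, mfrac_eq, gfun, Matrix.cons_val_zero, Matrix.cons_val_one,
    Matrix.head_cons, map_mul, map_pow, pow_add, div_pow]
  field_simp

lemma master (w1 w2 : ℕ) (γ1 γ2 : SL2Z) (Q : R2Q) (h1 : MvPolynomial.degreeOf 0 Q ≤ w1)
    (h2 : MvPolynomial.degreeOf 1 Q ≤ w2) :
    emb (polyAct2 w1 w2 γ1 γ2 Q)
      = emb (Bp γ1 (X 0)) ^ w1 * emb (Bp γ2 (X 1)) ^ w2 *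
        MvPolynomial.eval₂ (emb.comp MvPolynomial.C) (gfun γ1 γ2) Q := by
  conv_lhs => rw [trunc_eq w1 w2 Q h1 h2]
  conv_rhs => rw [trunc_eq w1 w2 Q h1 h2]
  have hact : polyAct2 w1 w2 γ1 γ2 = ⇑(polyAct2Hom w1 w2 γ1 γ2) := rfl
  rw [hact, map_sum, map_sum]
  simp only [map_sum]
  rw [MvPolynomial.eval₂_sum, Finset.mul_sum]
  refine Finset.sum_congr rfl fun a ha => ?_
  rw [MvPolynomial.eval₂_sum, Finset.mul_sum]
  refine Finset.sum_congr rfl fun b hb => ?_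
  rw [← hact, polyAct2_monomial w1 w2 a b (by simpa [Nat.lt_succ_iff] using ha)
    (by simpa [Nat.lt_succ_iff] using hb)]
  rw [term_K w1 w2 a b (by simpa [Nat.lt_succ_iff] using ha) (by simpa [Nat.lt_succ_iff] using hb)]
  rw [mono_eq, MvPolynomial.eval₂_mul, MvPolynomial.eval₂_mul, MvPolynomial.eval₂_pow,
    MvPolynomial.eval₂_pow, MvPolynomial.eval₂_C, MvPolynomial.eval₂_X, MvPolynomial.eval₂_X,
    RingHom.comp_apply]

lemma comp_term (w1 w2 m1 m2 : ℕ) (h1 : m1 ≤ w1) (h2 : m2 ≤ w2) (γ1 γ2 δ1 δ2 : SL2Z) (c : ℚ) :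
    polyAct2 w1 w2 γ1 γ2 (C c * mfrac δ1 (X 0) m1 (w1 - m1) * mfrac δ2 (X 1) m2 (w2 - m2))
      = C c * mfrac (γ1 * δ1) (X 0) m1 (w1 - m1) * mfrac (γ2 * δ2) (X 1) m2 (w2 - m2) := by
  apply emb_inj
  have hd := degreeOf_term_le δ1 δ2 c m1 (w1 - m1) m2 (w2 - m2)
  rw [master w1 w2 γ1 γ2 _ (le_trans hd.1 (by omega)) (le_trans hd.2 (by omega))]
  obtain ⟨n1, rfl⟩ : ∃ n1, w1 = m1 + n1 := ⟨w1 - m1, by omega⟩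
  obtain ⟨n2, rfl⟩ : ∃ n2, w2 = m2 + n2 := ⟨w2 - m2, by omega⟩
  simp only [Nat.add_sub_cancel_left]
  have hb1 : emb (Bp γ1 (X 0)) ≠ 0 := emb_B_ne _ _
  have hb2 : emb (Bp γ2 (X 1)) ≠ 0 := emb_B_ne _ _
  set e1 : KK := (emb.comp C) ((δ1.1 1 1 : ℤ) : ℚ) * gfun γ1 γ2 0
      - (emb.comp C) ((δ1.1 0 1 : ℤ) : ℚ) with he1
  set e2 : KK := (emb.comp C) (-((δ1.1 1 0 : ℤ) : ℚ)) * gfun γ1 γ2 0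
      + (emb.comp C) ((δ1.1 0 0 : ℤ) : ℚ) with he2
  set e3 : KK := (emb.comp C) ((δ2.1 1 1 : ℤ) : ℚ) * gfun γ1 γ2 1
      - (emb.comp C) ((δ2.1 0 1 : ℤ) : ℚ) with he3
  set e4 : KK := (emb.comp C) (-((δ2.1 1 0 : ℤ) : ℚ)) * gfun γ1 γ2 1
      + (emb.comp C) ((δ2.1 0 0 : ℤ) : ℚ) with he4
  have heval : MvPolynomial.eval₂ (emb.comp MvPolynomial.C) (gfun γ1 γ2)
      (C c * mfrac δ1 (X 0) m1 n1 * mfrac δ2 (X 1) m2 n2)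
      = (emb.comp MvPolynomial.C) c * e1 ^ m1 * e2 ^ n1 * e3 ^ m2 * e4 ^ n2 := by
    simp only [mfrac_eq, Ap, Bp, MvPolynomial.eval₂_mul, MvPolynomial.eval₂_pow,
      MvPolynomial.eval₂_sub, MvPolynomial.eval₂_add, MvPolynomial.eval₂_C,
      MvPolynomial.eval₂_X, he1, he2, he3, he4]
    ring
  have k1 : emb (Bp γ1 (X 0)) * e1 = emb (Ap (γ1 * δ1) (X 0)) := by
    rw [Ap_mul, he1]
    simp only [gfun, Matrix.cons_val_zero, RingHom.comp_apply, map_sub, map_mul]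
    field_simp
  have k2 : emb (Bp γ1 (X 0)) * e2 = emb (Bp (γ1 * δ1) (X 0)) := by
    rw [Bp_mul, he2]
    simp only [gfun, Matrix.cons_val_zero, RingHom.comp_apply, map_add, map_mul]
    field_simp
  have k3 : emb (Bp γ2 (X 1)) * e3 = emb (Ap (γ2 * δ2) (X 1)) := by
    rw [Ap_mul, he3]
    simp only [gfun, Matrix.cons_val_one, Matrix.head_cons, Matrix.cons_val_zero, RingHom.comp_apply, map_sub, map_mul]
    field_simp
  have k4 : emb (Bp γ2 (X 1)) * e4 = emb (Bp (γ2 * δ2) (X 1)) := by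
    rw [Bp_mul, he4]
    simp only [gfun, Matrix.cons_val_one, Matrix.head_cons, Matrix.cons_val_zero, RingHom.comp_apply, map_add, map_mul]
    field_simp
  rw [heval]
  simp only [mfrac_eq, map_mul, map_pow]
  rw [← k1, ← k2, ← k3, ← k4, RingHom.comp_apply]
  rw [mul_pow, mul_pow, mul_pow, mul_pow]
  ring

lemma polyAct2_comp (w1 w2 : ℕ) (γ1 γ2 δ1 δ2 : SL2Z) (P : R2Q) :
    polyAct2 w1 w2 γ1 γ2 (polyAct2 w1 w2 δ1 δ2 P)
      = polyAct2 w1 w2 (γ1 * δ1) (γ2 * δ2) P := by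
  have hact : polyAct2 w1 w2 γ1 γ2 = ⇑(polyAct2Hom w1 w2 γ1 γ2) := rfl
  conv_lhs => rw [show polyAct2 w1 w2 δ1 δ2 P = ∑ m1 ∈ Finset.range (w1 + 1),
      ∑ m2 ∈ Finset.range (w2 + 1),
      MvPolynomial.C (MvPolynomial.coeff (Finsupp.single 0 m1 + Finsupp.single 1 m2) P) *
        mfrac δ1 (MvPolynomial.X 0) m1 (w1 - m1) * mfrac δ2 (MvPolynomial.X 1) m2 (w2 - m2)
      from rfl]
  rw [hact, map_sum]
  simp only [map_sum]
  rw [← hact]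
  refine Eq.trans (Finset.sum_congr rfl fun a ha => Finset.sum_congr rfl fun b hb => ?_) rfl
  exact comp_term w1 w2 a b (by simpa [Nat.lt_succ_iff] using ha)
    (by simpa [Nat.lt_succ_iff] using hb) γ1 γ2 δ1 δ2 _

lemma matS_sq_coe : ((matS ^ 2 : SL2Z) : Matrix (Fin 2) (Fin 2) ℤ) = !![-1, 0; 0, -1] := by
  rw [pow_two, Matrix.SpecialLinearGroup.coe_mul]
  show (!![0, -1; 1, 0] : Matrix (Fin 2) (Fin 2) ℤ) * !![0, -1; 1, 0] = _
  norm_num [Matrix.mul_fin_two]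

lemma mfrac_S2 (x : R2Q) (m n : ℕ) (h : Even (m + n)) :
    (mfrac (matS ^ 2) x m n : R2Q) = mfrac 1 x m n := by
  unfold mfrac
  rw [matS_sq_coe]
  have c1 : ((1 : SL2Z) : Matrix (Fin 2) (Fin 2) ℤ) = 1 := rfl
  rw [c1]
  norm_num [Matrix.one_apply]
  rw [neg_pow x m]
  rw [show ((-1 : R2Q)) ^ m * x ^ m * (-1) ^ n = ((-1 : R2Q)) ^ (m + n) * x ^ m by
    rw [pow_add]; ring]
  rw [h.neg_one_pow, one_mul]

lemma polyAct2_S2_left (w1 w2 : ℕ) (hw1 : Even w1) (γ : SL2Z) (P : R2Q) :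
    polyAct2 w1 w2 (matS ^ 2) γ P = polyAct2 w1 w2 1 γ P := by
  unfold polyAct2
  refine Finset.sum_congr rfl fun m1 hm1 => Finset.sum_congr rfl fun m2 _ => ?_
  have hm1' : m1 ≤ w1 := by simpa [Nat.lt_succ_iff] using hm1
  rw [mfrac_S2 _ _ _ (by rw [show m1 + (w1 - m1) = w1 by omega]; exact hw1)]

lemma polyAct2_S2_right (w1 w2 : ℕ) (hw2 : Even w2) (γ : SL2Z) (P : R2Q) :
    polyAct2 w1 w2 γ (matS ^ 2) P = polyAct2 w1 w2 γ 1 P := by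
  unfold polyAct2
  refine Finset.sum_congr rfl fun m1 _ => Finset.sum_congr rfl fun m2 hm2 => ?_
  have hm2' : m2 ≤ w2 := by simpa [Nat.lt_succ_iff] using hm2
  rw [mfrac_S2 _ _ _ (by rw [show m2 + (w2 - m2) = w2 by omega]; exact hw2)]
/-- For `P ∈ W_{w1,w2}^ℚ`, the polynomial `Q = ((1,1)+(S,S))·P` is annihilated by the
one-variable Manin relations in each variable separately, i.e. lies in `W_{w1}^ℚ ⊗ W_{w2}^ℚ`. -/
theorem one_plus_SS_maps_W2_to_W_tensor_W (w1 w2 : ℕ) (hw1 : Even w1) (hw2 : Even w2)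
    (hw1' : 2 ≤ w1) (hw2' : 2 ≤ w2) (P : MvPolynomial (Fin 2) ℚ) (hP : MemW2 w1 w2 P) :
    (P + polyAct2 w1 w2 matS matS P) +
        polyAct2 w1 w2 matS 1 (P + polyAct2 w1 w2 matS matS P) = 0 ∧
    (P + polyAct2 w1 w2 matS matS P) +
        polyAct2 w1 w2 matU 1 (P + polyAct2 w1 w2 matS matS P) +
        polyAct2 w1 w2 (matU ^ 2) 1 (P + polyAct2 w1 w2 matS matS P) = 0 ∧
    (P + polyAct2 w1 w2 matS matS P) +
        polyAct2 w1 w2 1 matS (P + polyAct2 w1 w2 matS matS P) = 0 ∧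
    (P + polyAct2 w1 w2 matS matS P) +
        polyAct2 w1 w2 1 matU (P + polyAct2 w1 w2 matS matS P) +
        polyAct2 w1 w2 1 (matU ^ 2) (P + polyAct2 w1 w2 matS matS P) = 0 := by
  obtain ⟨hV, hR1, hR2, hR3, hR4⟩ := hP
  refine ⟨?_, ?_, ?_, ?_⟩
  · rw [polyAct2_add, polyAct2_comp, one_mul, ← pow_two,
      polyAct2_S2_left w1 w2 hw1 matS P]
    linear_combination hR1
  · rw [polyAct2_add, polyAct2_add, polyAct2_comp, polyAct2_comp, one_mul]
    linear_combination hR3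
  · rw [polyAct2_add, polyAct2_comp, one_mul, ← pow_two,
      polyAct2_S2_right w1 w2 hw2 matS P]
    linear_combination hR1
  · rw [polyAct2_add, polyAct2_add, polyAct2_comp, polyAct2_comp, one_mul]
    linear_combination hR4
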